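/- Let m be a nonzero integer such that |m| is prime. Base change of coefficients along the inclusion ℤ → ℤ[1/m] induces a bijection from the set of SL₂(ℤ)-equivalence classes of binary quadratic forms over ℤ of discriminant 1 − 4m onto the set of SL₂(ℤ[1/m])-equivalence classes of binary quadratic forms over ℤ[1/m] of discriminant 1 − 4m. -/

import Mathlib

/-- A binary quadratic form `a x² + b x y + c y²` over a commutative ring. -/
structure BQF (R : Type*) [CommRing R] where
  a : R
  b : R
  c : R

namespace BQF

variable {R S : Type*} [CommRing R] [CommRing S]

/-- The discriminant `b² - 4ac`. -/
def disc (Q : BQF R) : R := Q.b ^ 2 - 4 * Q.a * Q.c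

/-- The action of `g ∈ SL₂(R)` on forms, `(g · Q)(v) = Q(g · v)`:
the coefficients are obtained by expanding `Q (g₀₀ x + g₀₁ y, g₁₀ x + g₁₁ y)`. -/
def act (g : Matrix.SpecialLinearGroup (Fin 2) R) (Q : BQF R) : BQF R where
  a := Q.a * g.1 0 0 ^ 2 + Q.b * g.1 0 0 * g.1 1 0 + Q.c * g.1 1 0 ^ 2
  b := 2 * Q.a * g.1 0 0 * g.1 0 1 + Q.b * (g.1 0 0 * g.1 1 1 + g.1 0 1 * g.1 1 0)
        + 2 * Q.c * g.1 1 0 * g.1 1 1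
  c := Q.a * g.1 0 1 ^ 2 + Q.b * g.1 0 1 * g.1 1 1 + Q.c * g.1 1 1 ^ 2

/-- Two forms are `SL₂(R)`-equivalent if they are in the same orbit. -/
def Equiv (Q₁ Q₂ : BQF R) : Prop := ∃ g, act g Q₁ = Q₂

/-- Base change of a binary quadratic form along a ring homomorphism. -/
def map (f : R →+* S) (Q : BQF R) : BQF S := ⟨f Q.a, f Q.b, f Q.c⟩

theorem disc_map (f : R →+* S) (Q : BQF R) : (Q.map f).disc = f Q.disc := by
  simp [disc, map, map_sub, map_mul, map_pow, map_ofNat]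

end BQF

/-- The number of `SL₂(R)`-equivalence classes of binary quadratic forms over `R`
of discriminant `D`. -/
noncomputable def classCount (R : Type*) [CommRing R] (D : R) : ℕ :=
  Nat.card (Quot (fun Q₁ Q₂ : {Q : BQF R // Q.disc = D} => BQF.Equiv Q₁.1 Q₂.1))



namespace BQF
variable {R S : Type*} [CommRing R] [CommRing S]

abbrev SL2 (R : Type*) [CommRing R] := Matrix.SpecialLinearGroup (Fin 2) R

lemma ext' {Q₁ Q₂ : BQF R} (ha : Q₁.a = Q₂.a) (hb : Q₁.b = Q₂.b) (hc : Q₁.c = Q₂.c) :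
    Q₁ = Q₂ := by cases Q₁; cases Q₂; simp_all

lemma det_entries (g : SL2 R) : g.1 0 0 * g.1 1 1 - g.1 0 1 * g.1 1 0 = 1 := by
  have := g.2; rwa [Matrix.det_fin_two] at this

lemma act_act (g h : SL2 R) (Q : BQF R) : act h (act g Q) = act (g * h) Q := by
  refine ext' ?_ ?_ ?_ <;>
    simp only [act, Matrix.SpecialLinearGroup.coe_mul, Matrix.mul_apply, Fin.sum_univ_two] <;> ring

lemma act_one (Q : BQF R) : act 1 Q = Q := by
  refine ext' ?_ ?_ ?_ <;>
    simp [act, Matrix.SpecialLinearGroup.coe_one, Matrix.one_apply]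

lemma equiv_refl (Q : BQF R) : Equiv Q Q := ⟨1, act_one Q⟩

lemma equiv_symm {Q₁ Q₂ : BQF R} (h : Equiv Q₁ Q₂) : Equiv Q₂ Q₁ := by
  obtain ⟨g, rfl⟩ := h
  exact ⟨g⁻¹, by rw [act_act, mul_inv_cancel, act_one]⟩

lemma equiv_trans {Q₁ Q₂ Q₃ : BQF R} (h : Equiv Q₁ Q₂) (h' : Equiv Q₂ Q₃) : Equiv Q₁ Q₃ := by
  obtain ⟨g, rfl⟩ := h; obtain ⟨g', rfl⟩ := h'
  exact ⟨g * g', (act_act g g' Q₁).symm⟩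

lemma disc_act (g : SL2 R) (Q : BQF R) : (act g Q).disc = Q.disc := by
  have h := det_entries g
  simp only [disc, act]
  linear_combination ((g.1 0 0 * g.1 1 1 - g.1 0 1 * g.1 1 0 + 1) *
    (Q.b ^ 2 - 4 * Q.a * Q.c)) * h

lemma map_act (f : R →+* S) (g : SL2 R) (Q : BQF R) :
    map f (act g Q) = act (Matrix.SpecialLinearGroup.map f g) (map f Q) := by
  refine ext' ?_ ?_ ?_ <;>
    simp [act, map, map_ofNat] <;> ring

end BQF

namespace BQF

lemma cancel_helper {k x y : ℤ} (hk : k ≠ 0) (h : k * (x - y) = 0) : x = y := by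
  rcases mul_eq_zero.mp h with h | h
  · exact absurd h hk
  · linarith [h]

lemma step_case1 (m A c β : ℤ) (hm0 : m ≠ 0)
    (hdisc : ((1-2*m) + 2*m^2*β) ^ 2 - 4 * (m^2*A) * c = 1 - 4*m) :
    Equiv (⟨m^2*A, (1-2*m) + 2*m^2*β, c⟩ : BQF ℤ) ⟨A, (1-2*m) + 2*m^2*β, m^2*c⟩ := by
  have h4 : (4*m^2 : ℤ) ≠ 0 := by positivity
  refine ⟨⟨!![-β, -c; A, 1-2*m+m^2*β], ?_⟩, ?_⟩
  · rw [Matrix.det_fin_two_of]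
    refine cancel_helper h4 ?_
    linear_combination -hdisc
  · refine ext' ?_ ?_ ?_ <;>
      simp only [act] <;> simp only [Matrix.cons_val', Matrix.cons_val_zero, Matrix.cons_val_one,
        Matrix.head_cons, Matrix.head_fin_const, Matrix.empty_val', Matrix.cons_val_fin_one,
        Matrix.of_apply]
    · exact cancel_helper h4 (by linear_combination (-A) * hdisc)
    · exact cancel_helper h4 (by linear_combination (-((1-2*m) + 2*m^2*β)) * hdisc)
    · exact cancel_helper h4 (by linear_combination (-m^2*c) * hdisc)

lemma step_case2 (m A c β : ℤ) (hm0 : m ≠ 0)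
    (hdisc : (-(1-2*m) + 2*m^2*β) ^ 2 - 4 * (m^2*A) * c = 1 - 4*m) :
    Equiv (⟨m^2*A, -(1-2*m) + 2*m^2*β, c⟩ : BQF ℤ) ⟨A, -(1-2*m) + 2*m^2*β, m^2*c⟩ := by
  have h4 : (4*m^2 : ℤ) ≠ 0 := by positivity
  refine ⟨⟨!![β, c; -A, (1-2*m)-m^2*β], ?_⟩, ?_⟩
  · rw [Matrix.det_fin_two_of]
    refine cancel_helper h4 ?_
    linear_combination -hdisc
  · refine ext' ?_ ?_ ?_ <;>
      simp only [act] <;> simp only [Matrix.cons_val', Matrix.cons_val_zero, Matrix.cons_val_one,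
        Matrix.head_cons, Matrix.head_fin_const, Matrix.empty_val', Matrix.cons_val_fin_one,
        Matrix.of_apply]
    · exact cancel_helper h4 (by linear_combination (-A) * hdisc)
    · exact cancel_helper h4 (by linear_combination (-(-(1-2*m) + 2*m^2*β)) * hdisc)
    · exact cancel_helper h4 (by linear_combination (-m^2*c) * hdisc)

lemma sq_dvd_of_mul {m x y N : ℤ} (hm : Prime m) (h : x * y = m^2 * N) (hnot : ¬ m ∣ x) :
    m^2 ∣ y := by
  have h1 : m ∣ x * y := ⟨m * N, by linear_combination h⟩
  have h2 : m ∣ y := (hm.dvd_mul.mp h1).resolve_left hnot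
  obtain ⟨y', rfl⟩ := h2
  have h3 : x * y' = m * N := by
    have := mul_left_cancel₀ hm.ne_zero (by linear_combination h : m * (x * y') = m * (m * N))
    exact this
  have h4 : m ∣ y' := (hm.dvd_mul.mp ⟨N, h3⟩).resolve_left hnot
  obtain ⟨y'', rfl⟩ := h4
  exact ⟨y'', by ring⟩

lemma key_dichotomy (m A b c : ℤ) (hm : Prime m)
    (hdisc : b^2 - 4*(m^2*A)*c = 1 - 4*m) :
    (∃ β, b = (1-2*m) + 2*m^2*β) ∨ (∃ β, b = -(1-2*m) + 2*m^2*β) := by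
  have hodd : Odd b := by
    have h1 : Odd (b^2) := ⟨2*m^2*A*c - 2*m, by linear_combination hdisc⟩
    rcases Int.odd_pow.mp h1 with h | h
    · exact h
    · omega
  obtain ⟨t, rfl⟩ := hodd
  have hxy : (t+m) * (t+1-m) = m^2 * (A*c - 1) :=
    cancel_helper (by norm_num : (4:ℤ) ≠ 0) (by linear_combination hdisc)
  by_cases hx : m ∣ (t + m)
  · have hny : ¬ m ∣ (t+1-m) := by
      intro hy
      have h1 : m ∣ 1 :=
        (show (1:ℤ) = ((t+1-m)-(t+m)) + 2*m by ring) ▸ dvd_add (dvd_sub hy hx) ⟨2, by ring⟩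
      exact hm.not_dvd_one h1
    obtain ⟨β, hβ⟩ := sq_dvd_of_mul hm (by linear_combination hxy : (t+1-m)*(t+m) = m^2*(A*c-1)) hny
    exact Or.inl ⟨β, by linarith [hβ]⟩
  · obtain ⟨β, hβ⟩ := sq_dvd_of_mul hm hxy hx
    exact Or.inr ⟨β, by linarith [hβ]⟩

lemma step (m A b c : ℤ) (hm : Prime m) (hdisc : b^2 - 4*(m^2*A)*c = 1 - 4*m) :
    Equiv (⟨m^2*A, b, c⟩ : BQF ℤ) ⟨A, b, m^2*c⟩ := by
  rcases key_dichotomy m A b c hm hdisc with ⟨β, rfl⟩ | ⟨β, rfl⟩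
  · exact step_case1 m A c β hm.ne_zero hdisc
  · exact step_case2 m A c β hm.ne_zero hdisc

lemma step_iter (m : ℤ) (hm : Prime m) :
    ∀ (n : ℕ) (A b c : ℤ), (b^2 - 4*(m^(2*n)*A)*c = 1 - 4*m) →
      Equiv (⟨m^(2*n)*A, b, c⟩ : BQF ℤ) ⟨A, b, m^(2*n)*c⟩ := by
  intro n
  induction n with
  | zero => intro A b c _; simpa using equiv_refl (⟨A, b, c⟩ : BQF ℤ)
  | succ n ih =>
    intro A b c hdisc
    have e1 : m^(2*(n+1))*A = m^2*(m^(2*n)*A) := by ring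
    have h1 : Equiv (⟨m^(2*(n+1))*A, b, c⟩ : BQF ℤ) ⟨m^(2*n)*A, b, m^2*c⟩ := by
      rw [e1]
      exact step m (m^(2*n)*A) b c hm (by linear_combination hdisc)
    have h2 : Equiv (⟨m^(2*n)*A, b, m^2*c⟩ : BQF ℤ) ⟨A, b, m^(2*n)*(m^2*c)⟩ :=
      ih A b (m^2*c) (by linear_combination hdisc)
    have e2 : m^(2*n)*(m^2*c) = m^(2*(n+1))*c := by ring
    exact equiv_trans h1 (e2 ▸ h2)

end BQF

namespace BQF

/-- transpose of an SL₂ matrix -/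
def SLt {R : Type*} [CommRing R] (g : SL2 R) : SL2 R :=
  ⟨Matrix.transpose g.1, by rw [Matrix.det_transpose]; exact g.2⟩

/-- Clear the (1,0) entry of a 2×2 integer matrix by a left SL₂(ℤ) multiplication. -/
lemma col_clear (M : Matrix (Fin 2) (Fin 2) ℤ) :
    ∃ γ : SL2 ℤ, (γ.1 * M) 1 0 = 0 ∧ (γ.1 * M) 0 0 = Int.gcd (M 0 0) (M 1 0) := by
  set a := M 0 0 with ha
  set c := M 1 0 with hc
  by_cases h0 : Int.gcd a c = 0
  · have h1 : a = 0 := Int.natAbs_eq_zero.mp (Nat.eq_zero_of_gcd_eq_zero_left h0)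
    have h2 : c = 0 := Int.natAbs_eq_zero.mp (Nat.eq_zero_of_gcd_eq_zero_right h0)
    refine ⟨1, ?_, ?_⟩ <;>
      simp [Matrix.SpecialLinearGroup.coe_one, Matrix.one_mul, ← ha, ← hc, h1, h2, h0]
  · have hg : (Int.gcd a c : ℤ) ≠ 0 := by exact_mod_cast fun h => h0 (by exact_mod_cast h)
    have hbez : (Int.gcd a c : ℤ) = a * Int.gcdA a c + c * Int.gcdB a c := Int.gcd_eq_gcd_ab a c
    obtain ⟨a', ha'⟩ : (Int.gcd a c : ℤ) ∣ a := Int.gcd_dvd_left a c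
    obtain ⟨c', hc'⟩ : (Int.gcd a c : ℤ) ∣ c := Int.gcd_dvd_right a c
    have hdet : Int.gcdA a c * a' + Int.gcdB a c * c' = 1 := by
      have h3 : (Int.gcd a c : ℤ) * (Int.gcdA a c * a' + Int.gcdB a c * c') =
          (Int.gcd a c : ℤ) * 1 := by linear_combination -hbez - Int.gcdA a c * ha' - Int.gcdB a c * hc'
      exact mul_left_cancel₀ hg h3
    refine ⟨⟨!![Int.gcdA a c, Int.gcdB a c; -c', a'], by
      rw [Matrix.det_fin_two_of]; linear_combination hdet⟩, ?_, ?_⟩ <;>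
      simp only [Matrix.mul_apply, Fin.sum_univ_two] <;>
      simp only [Matrix.cons_val', Matrix.cons_val_zero, Matrix.cons_val_one,
        Matrix.head_cons, Matrix.head_fin_const, Matrix.empty_val', Matrix.cons_val_fin_one,
        Matrix.of_apply, ← ha, ← hc]
    · linear_combination -c' * ha' + a' * hc'
    · linear_combination -hbez
end BQF

namespace BQF

lemma row_clear (M : Matrix (Fin 2) (Fin 2) ℤ) :
    ∃ γ : SL2 ℤ, (M * γ.1) 0 1 = 0 ∧ (M * γ.1) 0 0 = Int.gcd (M 0 0) (M 0 1) := by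
  obtain ⟨γ, h1, h2⟩ := col_clear (Matrix.transpose M)
  refine ⟨SLt γ, ?_, ?_⟩
  · have : (M * (SLt γ).1) 0 1 = (γ.1 * Matrix.transpose M) 1 0 := by
      simp [SLt, Matrix.mul_apply, Fin.sum_univ_two, Matrix.transpose_apply, mul_comm]
    rw [this, h1]
  · have : (M * (SLt γ).1) 0 0 = (γ.1 * Matrix.transpose M) 0 0 := by
      simp [SLt, Matrix.mul_apply, Fin.sum_univ_two, Matrix.transpose_apply, mul_comm]
    rw [this, h2]; simp [Matrix.transpose_apply]

/-- If the first column is entirely zero we can finish directly. -/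
lemma snf_zero (M : Matrix (Fin 2) (Fin 2) ℤ) (h10 : M 1 0 = 0) (h00 : M 0 0 = 0) :
    ∃ γ₁ γ₂ : SL2 ℤ, (γ₁.1 * M * γ₂.1) 0 1 = 0 ∧ (γ₁.1 * M * γ₂.1) 1 0 = 0 := by
  have w : SL2 ℤ := ⟨!![0,-1;1,0], by simp [Matrix.det_fin_two_of]⟩
  set w : SL2 ℤ := ⟨!![0,-1;1,0], by simp [Matrix.det_fin_two_of]⟩ with hw
  set N := M * w.1 with hN
  have hN01 : N 0 1 = 0 := by
    simp [hN, hw, Matrix.mul_apply, Fin.sum_univ_two, h00]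
  have hN11 : N 1 1 = 0 := by
    simp [hN, hw, Matrix.mul_apply, Fin.sum_univ_two, h10]
  obtain ⟨γ, hg1, _⟩ := col_clear N
  refine ⟨γ, w, ?_, ?_⟩
  · have : γ.1 * M * w.1 = γ.1 * N := by rw [hN, Matrix.mul_assoc]
    rw [this]
    simp [Matrix.mul_apply, Fin.sum_univ_two, hN01, hN11]
  · have : γ.1 * M * w.1 = γ.1 * N := by rw [hN, Matrix.mul_assoc]
    rw [this, hg1]

lemma snf_aux : ∀ (n : ℕ) (M : Matrix (Fin 2) (Fin 2) ℤ), M 1 0 = 0 → (M 0 0).natAbs ≤ n →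
    ∃ γ₁ γ₂ : SL2 ℤ, (γ₁.1 * M * γ₂.1) 0 1 = 0 ∧ (γ₁.1 * M * γ₂.1) 1 0 = 0 := by
  intro n
  induction n with
  | zero =>
    intro M h10 h00
    exact snf_zero M h10 (by omega)
  | succ n ih =>
    intro M h10 hle
    by_cases h00 : M 0 0 = 0
    · exact snf_zero M h10 h00
    by_cases hdvd : M 0 0 ∣ M 0 1
    · obtain ⟨q, hq⟩ := hdvd
      refine ⟨1, ⟨!![1,-q;0,1], by simp [Matrix.det_fin_two_of]⟩, ?_, ?_⟩ <;>
        simp [Matrix.SpecialLinearGroup.coe_one, Matrix.mul_apply, Fin.sum_univ_two, h10, hq] <;> ring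
    · obtain ⟨γ₂, hA, hB⟩ := row_clear M
      set N := M * γ₂.1 with hNdef
      have hg_lt : (N 0 0).natAbs ≤ n := by
        rw [hB]
        have h1 : Int.gcd (M 0 0) (M 0 1) ∣ (M 0 0).natAbs := Nat.gcd_dvd_left _ _
        have h2 : Int.gcd (M 0 0) (M 0 1) ≠ (M 0 0).natAbs := by
          intro h
          apply hdvd
          rw [← Int.natAbs_dvd_natAbs, ← h]
          exact Nat.gcd_dvd_right _ _
        have h3 : (M 0 0).natAbs ≠ 0 := fun h => h00 (Int.natAbs_eq_zero.mp h)
        have h4 := Nat.le_of_dvd (Nat.pos_of_ne_zero h3) h1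
        simp only [Int.natAbs_natCast]
        omega
      obtain ⟨δ₁, δ₂, hD1, hD2⟩ := ih (Matrix.transpose N) (by simp [Matrix.transpose_apply, hA]) hg_lt
      refine ⟨SLt δ₂, γ₂ * SLt δ₁, ?_, ?_⟩
      · have key : ((SLt δ₂).1 * M * (γ₂ * SLt δ₁).1) 0 1
            = (δ₁.1 * Matrix.transpose N * δ₂.1) 1 0 := by
          rw [Matrix.SpecialLinearGroup.coe_mul, hNdef]
          simp [SLt, Matrix.mul_apply, Fin.sum_univ_two, Matrix.transpose_apply]
          ring
        rw [key, hD2]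
      · have key : ((SLt δ₂).1 * M * (γ₂ * SLt δ₁).1) 1 0
            = (δ₁.1 * Matrix.transpose N * δ₂.1) 0 1 := by
          rw [Matrix.SpecialLinearGroup.coe_mul, hNdef]
          simp [SLt, Matrix.mul_apply, Fin.sum_univ_two, Matrix.transpose_apply]
          ring
        rw [key, hD1]

lemma snf (M : Matrix (Fin 2) (Fin 2) ℤ) :
    ∃ γ₁ γ₂ : SL2 ℤ, (γ₁.1 * M * γ₂.1) 0 1 = 0 ∧ (γ₁.1 * M * γ₂.1) 1 0 = 0 := by
  obtain ⟨γ, h1, _⟩ := col_clear M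
  obtain ⟨δ₁, δ₂, h2, h3⟩ := snf_aux ((γ.1 * M) 0 0).natAbs (γ.1 * M) h1 le_rfl
  simp only [Matrix.mul_assoc] at h2 h3
  refine ⟨δ₁ * γ, δ₂, ?_, ?_⟩ <;>
    · rw [Matrix.SpecialLinearGroup.coe_mul]
      simp only [Matrix.mul_assoc]
      assumption

end BQF

namespace BQF

lemma pow_sq_of_mul_eq {x y m : ℤ} {k : ℕ} (hm : m.natAbs.Prime) (h : x * y = m^(2*k)) :
    ∃ i ≤ 2*k, x^2 = m^(2*i) := by
  have hdvd : x ∣ m^(2*k) := ⟨y, h.symm⟩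
  have h2 : x.natAbs ∣ m.natAbs^(2*k) := by
    rw [← Int.natAbs_pow]; exact Int.natAbs_dvd_natAbs.mpr hdvd
  obtain ⟨i, hi, hx⟩ := (Nat.dvd_prime_pow hm).mp h2
  refine ⟨i, hi, ?_⟩
  have h3 : ((x.natAbs : ℤ))^2 = ((m.natAbs : ℤ)^i)^2 := by rw [hx]; push_cast; ring
  rw [Int.natAbs_sq] at h3
  rw [h3, show ((m.natAbs:ℤ)^i)^2 = (((m.natAbs:ℤ))^2)^i by ring, Int.natAbs_sq]
  ring

section Injectivity

variable (m : ℤ)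

local notation "R" => Localization.Away m
local notation "φ" => algebraMap ℤ R

lemma loc_inj (hm0 : m ≠ 0) : Function.Injective (φ) :=
  IsLocalization.injective _ (Submonoid.powers_le.mpr (mem_nonZeroDivisors_of_ne_zero hm0))

lemma loc_unit : IsUnit (φ m) := IsLocalization.Away.algebraMap_isUnit m

lemma loc_surj (x : R) : ∃ (z : ℤ) (k : ℕ), x * φ m ^ k = φ z := by
  obtain ⟨⟨z, s⟩, h⟩ := IsLocalization.surj (Submonoid.powers m) x
  obtain ⟨k, hk⟩ := s.2
  refine ⟨z, k, ?_⟩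
  simp only at h hk
  rw [← map_pow, hk]
  exact h

lemma loc_upgrade {x : R} {z : ℤ} {e : ℕ} (h : x * φ m ^ e = φ z) {k : ℕ} (hek : e ≤ k) :
    x * φ m ^ k = φ (z * m^(k-e)) := by
  have h1 : (φ m : R) ^ k = φ m ^ e * φ m ^ (k-e) := by rw [← pow_add]; congr 1; omega
  rw [h1, ← mul_assoc, h, ← map_pow, ← map_mul]

lemma inj_lemma (hm : m.natAbs.Prime) (Q₁ Q₂ : BQF ℤ)
    (h₁ : Q₁.disc = 1 - 4*m) (h₂ : Q₂.disc = 1 - 4*m)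
    (g : SL2 R)
    (hg : act g (map (φ) Q₁) = map (φ) Q₂) :
    Equiv Q₁ Q₂ := by
  have hpm : Prime m := Int.prime_iff_natAbs_prime.mpr hm
  have hm0 : m ≠ 0 := hpm.ne_zero
  have hinj : Function.Injective (φ) := loc_inj m hm0
  have hu : IsUnit ((φ) m) := loc_unit m
  -- common denominator for the entries of g
  obtain ⟨k, M, hM⟩ : ∃ (k : ℕ) (M : Matrix (Fin 2) (Fin 2) ℤ),
      ∀ i j, g.1 i j * φ m ^ k = φ (M i j) := by
    obtain ⟨z00, k00, h00⟩ := loc_surj m (g.1 0 0)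
    obtain ⟨z01, k01, h01⟩ := loc_surj m (g.1 0 1)
    obtain ⟨z10, k10, h10⟩ := loc_surj m (g.1 1 0)
    obtain ⟨z11, k11, h11⟩ := loc_surj m (g.1 1 1)
    refine ⟨k00 ⊔ k01 ⊔ k10 ⊔ k11,
      !![z00 * m^((k00 ⊔ k01 ⊔ k10 ⊔ k11) - k00), z01 * m^((k00 ⊔ k01 ⊔ k10 ⊔ k11) - k01);
         z10 * m^((k00 ⊔ k01 ⊔ k10 ⊔ k11) - k10), z11 * m^((k00 ⊔ k01 ⊔ k10 ⊔ k11) - k11)], ?_⟩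
    intro i j
    fin_cases i <;> fin_cases j <;>
      simp only [Matrix.cons_val', Matrix.cons_val_zero, Matrix.cons_val_one,
        Matrix.head_cons, Matrix.head_fin_const, Matrix.empty_val', Matrix.cons_val_fin_one,
        Matrix.of_apply, Fin.isValue]
    · exact loc_upgrade m h00 (by omega)
    · exact loc_upgrade m h01 (by omega)
    · exact loc_upgrade m h10 (by omega)
    · exact loc_upgrade m h11 (by omega)
  -- determinant of M
  have hdetg := det_entries g
  have hdetM : M 0 0 * M 1 1 - M 0 1 * M 1 0 = m^(2*k) := by
    apply hinj
    rw [map_sub, map_mul, map_mul, map_pow]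
    linear_combination -((φ (M 1 1)) * hM 0 0) - (g.1 0 0 * φ m ^ k) * hM 1 1
      + (φ (M 1 0)) * hM 0 1 + (g.1 0 1 * φ m ^ k) * hM 1 0
      + ((φ) m ^ k * φ m ^ k) * hdetg
  -- Smith normal form
  obtain ⟨γ₁, γ₂, hN01, hN10⟩ := snf M
  set N := γ₁.1 * M * γ₂.1 with hNdef
  have hdetN : N 0 0 * N 1 1 = m^(2*k) := by
    have hdN : N.det = m^(2*k) := by
      rw [hNdef, Matrix.det_mul, Matrix.det_mul, γ₁.2, γ₂.2, one_mul, mul_one]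
      rw [Matrix.det_fin_two]; exact hdetM
    rw [Matrix.det_fin_two, hN01, hN10] at hdN
    linarith [hdN]
  obtain ⟨i, hik, hNsq⟩ := pow_sq_of_mul_eq hm hdetN
  -- transformed group element
  set γ₁' := Matrix.SpecialLinearGroup.map (φ) γ₁ with hγ₁'
  set γ₂' := Matrix.SpecialLinearGroup.map (φ) γ₂ with hγ₂'
  set g' := γ₁' * g * γ₂' with hg'def
  have hg'entry : ∀ i j, g'.1 i j * φ m ^ k = φ (N i j) := by
    intro i j
    have expand : g'.1 i j = γ₁'.1 i 0 * (g.1 0 0 * γ₂'.1 0 j + g.1 0 1 * γ₂'.1 1 j)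
        + γ₁'.1 i 1 * (g.1 1 0 * γ₂'.1 0 j + g.1 1 1 * γ₂'.1 1 j) := by
      rw [hg'def]
      simp only [Matrix.SpecialLinearGroup.coe_mul, Matrix.mul_apply, Fin.sum_univ_two]
      ring
    have hNexp : N i j = γ₁.1 i 0 * (M 0 0 * γ₂.1 0 j + M 0 1 * γ₂.1 1 j)
        + γ₁.1 i 1 * (M 1 0 * γ₂.1 0 j + M 1 1 * γ₂.1 1 j) := by
      rw [hNdef]
      simp only [Matrix.mul_apply, Fin.sum_univ_two]
      ring
    have e1 : ∀ a b, γ₁'.1 a b = φ (γ₁.1 a b) := by intro a b; simp [hγ₁']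
    have e2 : ∀ a b, γ₂'.1 a b = φ (γ₂.1 a b) := by intro a b; simp [hγ₂']
    rw [expand, hNexp]
    simp only [e1, e2, map_add, map_mul]
    linear_combination (φ (γ₁.1 i 0) * φ (γ₂.1 0 j)) * hM 0 0
      + (φ (γ₁.1 i 0) * φ (γ₂.1 1 j)) * hM 0 1
      + (φ (γ₁.1 i 1) * φ (γ₂.1 0 j)) * hM 1 0
      + (φ (γ₁.1 i 1) * φ (γ₂.1 1 j)) * hM 1 1
  have hup : IsUnit ((φ) m ^ k) := hu.pow k
  have h01 : g'.1 0 1 = 0 := by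
    have := hg'entry 0 1; rw [hN01, map_zero] at this
    exact (IsUnit.mul_left_eq_zero hup).mp this
  have h10 : g'.1 1 0 = 0 := by
    have := hg'entry 1 0; rw [hN10, map_zero] at this
    exact (IsUnit.mul_left_eq_zero hup).mp this
  set δ := g'.1 0 0 with hδ
  set δ' := g'.1 1 1 with hδ'
  have hδdet : δ * δ' = 1 := by
    have := det_entries g'
    rw [h01] at this; rw [← hδ, ← hδ'] at this; linear_combination this
  have hδsq : δ^2 * ((φ) m ^ k)^2 = (φ) m ^ (2*i) := by
    have h := hg'entry 0 0
    rw [← hδ] at h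
    calc δ^2 * ((φ) m ^ k)^2 = (δ * (φ) m ^k)^2 := by ring
    _ = (φ (N 0 0))^2 := by rw [h]
    _ = φ (N 0 0 ^2) := by rw [map_pow]
    _ = φ (m^(2*i)) := by rw [hNsq]
    _ = (φ) m ^ (2*i) := by rw [map_pow]
  set A₁ := act γ₁⁻¹ Q₁ with hA₁
  set A₂ := act γ₂ Q₂ with hA₂
  have key : act g' (map (φ) A₁) = map (φ) A₂ := by
    rw [hA₁, hA₂, map_act, map_act]
    rw [act_act]
    have heq : Matrix.SpecialLinearGroup.map (φ) γ₁⁻¹ * g' = g * γ₂' := by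
      rw [map_inv, hg'def, ← hγ₁']; group
    rw [heq, ← act_act, hg]
  have ka : φ A₁.a * δ^2 = φ A₂.a := by
    have h := congrArg BQF.a key
    simp only [act, map, h01, h10, ← hδ, ← hδ', mul_zero, zero_mul, add_zero,
      ne_eq, OfNat.ofNat_ne_zero, not_false_eq_true, zero_pow] at h
    linear_combination h
  have kb : φ A₁.b * (δ * δ') = φ A₂.b := by
    have h := congrArg BQF.b key
    simp only [act, map, h01, h10, ← hδ, ← hδ', mul_zero, zero_mul, add_zero] at h
    linear_combination h
  have hb : A₁.b = A₂.b := by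
    apply hinj
    rw [← kb, hδdet, mul_one]
  have kc : φ A₁.c * δ'^2 = φ A₂.c := by
    have h := congrArg BQF.c key
    simp only [act, map, h01, h10, ← hδ, ← hδ', mul_zero, zero_mul, add_zero, zero_add,
      ne_eq, OfNat.ofNat_ne_zero, not_false_eq_true, zero_pow] at h
    linear_combination h
  have hEA₁ : Equiv Q₁ A₁ := ⟨γ₁⁻¹, hA₁.symm⟩
  have hEA₂ : Equiv Q₂ A₂ := ⟨γ₂, hA₂.symm⟩
  rcases le_or_gt k i with hki | hik2
  · -- i ≥ k : a₂ = m^(2(i-k)) a₁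
    have hpow : ((φ) m ^ (2*(i-k))) * ((φ) m ^ k)^2 = (φ) m ^ (2*i) := by
      rw [← pow_mul, ← pow_add]; congr 1; omega
    have hδ2 : δ^2 = (φ) m ^ (2*(i-k)) := by
      refine IsUnit.mul_right_cancel (hup.pow 2) ?_
      rw [hδsq, hpow]
    have haa : A₂.a = m^(2*(i-k)) * A₁.a := by
      apply hinj
      rw [map_mul, map_pow, ← ka, hδ2]; ring
    have hcc : A₁.c = m^(2*(i-k)) * A₂.c := by
      apply hinj
      rw [map_mul, map_pow]
      have h1 : φ A₁.c * (δ * δ')^2 = φ A₂.c * δ^2 := by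
        linear_combination δ^2 * kc
      rw [hδdet, hδ2] at h1
      linear_combination h1
    have hdA₂ : A₂.disc = 1 - 4*m := by rw [hA₂, disc_act, h₂]
    have hstep := step_iter m hpm (i-k) A₁.a A₁.b A₂.c (by
      have h1 : A₂.b^2 - 4*A₂.a*A₂.c = 1 - 4*m := hdA₂
      rw [haa, ← hb] at h1
      linear_combination h1)
    have eA₂ : A₂ = ⟨m^(2*(i-k))*A₁.a, A₁.b, A₂.c⟩ := ext' haa hb.symm rfl
    have eA₁ : A₁ = ⟨A₁.a, A₁.b, m^(2*(i-k))*A₂.c⟩ := ext' rfl rfl hcc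
    have hE : Equiv A₂ A₁ := by rw [eA₂, eA₁]; exact hstep
    exact equiv_trans hEA₁ (equiv_symm (equiv_trans hEA₂ hE))
  · -- i < k : a₁ = m^(2(k-i)) a₂
    have hpow : ((φ) m ^ (2*(k-i))) * ((φ) m ^ (2*i)) = ((φ) m ^ k)^2 := by
      rw [← pow_mul, ← pow_add]; congr 1; omega
    have hδ2 : δ^2 * (φ) m ^ (2*(k-i)) = 1 := by
      refine IsUnit.mul_right_cancel (hu.pow (2*i)) ?_
      rw [one_mul, mul_assoc, hpow, hδsq]
    have haa : A₁.a = m^(2*(k-i)) * A₂.a := by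
      apply hinj
      rw [map_mul, map_pow, ← ka]
      linear_combination (-(φ A₁.a)) * hδ2
    have hcc : A₂.c = m^(2*(k-i)) * A₁.c := by
      apply hinj
      rw [map_mul, map_pow, ← kc]
      have h1 : δ'^2 * (δ^2 * (φ) m ^ (2*(k-i))) = δ'^2 := by rw [hδ2, mul_one]
      have h2 : (δ * δ')^2 * (φ) m ^ (2*(k-i)) = δ'^2 := by linear_combination h1
      rw [hδdet] at h2
      linear_combination (φ A₁.c) * h2.symm
    have hdA₁ : A₁.disc = 1 - 4*m := by rw [hA₁, disc_act, h₁]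
    have hstep := step_iter m hpm (k-i) A₂.a A₁.b A₁.c (by
      have h1 : A₁.b^2 - 4*A₁.a*A₁.c = 1 - 4*m := hdA₁
      rw [haa] at h1
      linear_combination h1)
    have eA₁ : A₁ = ⟨m^(2*(k-i))*A₂.a, A₁.b, A₁.c⟩ := ext' haa rfl rfl
    have eA₂ : A₂ = ⟨A₂.a, A₁.b, m^(2*(k-i))*A₁.c⟩ := ext' rfl hb.symm hcc
    have hE : Equiv A₁ A₂ := by rw [eA₁, eA₂]; exact hstep
    exact equiv_trans (equiv_trans hEA₁ hE) (equiv_symm hEA₂)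

end Injectivity
end BQF

namespace BQF

/-- extract the exact power of a prime from a nonzero integer -/
lemma int_factor {m : ℤ} (hpm : Prime m) :
    ∀ (n : ℕ) (A : ℤ), A ≠ 0 → A.natAbs ≤ n → ∃ (s : ℕ) (A' : ℤ), A = A' * m^s ∧ ¬ m ∣ A' := by
  intro n
  induction n with
  | zero => intro A hA h; exact absurd (Int.natAbs_eq_zero.mp (Nat.le_zero.mp h)) hA
  | succ n ih =>
    intro A hA h
    by_cases hdvd : m ∣ A
    · obtain ⟨A₁, rfl⟩ := hdvd
      have hA₁ : A₁ ≠ 0 := fun h0 => hA (by rw [h0, mul_zero])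
      have hm2 : 2 ≤ m.natAbs := (Int.prime_iff_natAbs_prime.mp hpm).two_le
      have hlt : A₁.natAbs ≤ n := by
        have h1 : (m * A₁).natAbs = m.natAbs * A₁.natAbs := Int.natAbs_mul m A₁
        have h2 : 1 ≤ A₁.natAbs := Nat.one_le_iff_ne_zero.mpr (fun h0 => hA₁ (Int.natAbs_eq_zero.mp h0))
        nlinarith [h, h1, h2, hm2]
      obtain ⟨s, A', hfac, hnd⟩ := ih A₁ hA₁ hlt
      exact ⟨s + 1, A', by rw [hfac]; ring, hnd⟩
    · exact ⟨0, A, by ring, hdvd⟩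

lemma primepow_dvd {m : ℤ} (hpm : Prime m) {W : ℤ} (hW : ¬ m ∣ W) :
    ∀ (n : ℕ) (C : ℤ), m^n ∣ W * C → m^n ∣ C := by
  intro n
  induction n with
  | zero => intro C _; rw [pow_zero]; exact one_dvd C
  | succ n ih =>
    intro C h
    have h1 : m ∣ W * C := dvd_trans (dvd_pow_self m (Nat.succ_ne_zero n)) h
    have h2 : m ∣ C := (hpm.dvd_mul.mp h1).resolve_left hW
    obtain ⟨C', rfl⟩ := h2
    obtain ⟨Y, hY⟩ := h
    have h3 : m^n ∣ W * C' := by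
      refine ⟨Y, ?_⟩
      have := mul_left_cancel₀ hpm.ne_zero
        (by linear_combination hY : m * (W * C') = m * (m ^ n * Y))
      linarith [this]
    obtain ⟨Z, hZ⟩ := ih C' h3
    exact ⟨Z, by rw [hZ]; ring⟩

/-- Bezout-style CRT: find `β` with `q ∣ β m^t - B` and `m³ ∣ β - 1`. -/
lemma crt_beta {m q B : ℤ} (t : ℕ) (hpm : Prime m) (hq : ¬ m ∣ q) :
    ∃ β : ℤ, q ∣ (β * m^t - B) ∧ m^3 ∣ (β - 1) := by
  have hcop : IsCoprime m q := (hpm.coprime_iff_not_dvd).mpr hq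
  obtain ⟨u, v, huv⟩ := (hcop.pow_left : IsCoprime (m^t) q)
  obtain ⟨u2, v2, hu2v2⟩ := (hcop.symm.pow_right : IsCoprime q (m^3))
  set r := u * B with hr
  set β := r * v2 * m^3 + u2 * q with hβ
  have c1 : q ∣ β - r := ⟨u2 * (1 - r), by rw [hβ]; linear_combination r * hu2v2⟩
  have c2 : q ∣ r * m^t - B := ⟨-B * v, by rw [hr]; linear_combination B * huv⟩
  refine ⟨β, ?_, ⟨v2 * (r - 1), by rw [hβ]; linear_combination hu2v2⟩⟩
  have e : β * m^t - B = (β - r) * m^t + (r * m^t - B) := by ring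
  rw [e]
  exact dvd_add (c1.mul_right _) c2

end BQF

namespace BQF

lemma norm_data {m : ℤ} (hm : m.natAbs.Prime) {A' : ℤ} (e : ℕ) (he : e ≤ 1) (hA' : ¬ m ∣ A') :
    ∃ (q : ℤ) (w : ℕ) (W : ℤ) (E : ℕ),
      2*(A'*m^e) = q * m^w ∧ ¬ m ∣ q ∧
      4*(A'*m^e) = W * m^E ∧ ¬ m ∣ W ∧
      ∀ β : ℤ, m^3 ∣ β - 1 → m^E ∣ β^2 - (1 - 4*m) := by
  have hpm : Prime m := Int.prime_iff_natAbs_prime.mpr hm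
  by_cases h2 : m.natAbs = 2
  · obtain ⟨ε, hε1, hε⟩ : ∃ ε:ℤ, (ε = 1 ∨ ε = -1) ∧ 2 = ε * m := by
      rcases Int.natAbs_eq m with h | h
      · exact ⟨1, Or.inl rfl, by rw [h, h2]; norm_num⟩
      · exact ⟨-1, Or.inr rfl, by rw [h, h2]; norm_num⟩
    have hε2 : ε^2 = 1 := by rcases hε1 with rfl | rfl <;> norm_num
    refine ⟨ε*A', e+1, A', e+2, ?_, ?_, ?_, hA', ?_⟩
    · linear_combination (A' * m^e) * hε
    · intro hdvd
      apply hA'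
      rcases hε1 with rfl | rfl
      · simpa using hdvd
      · exact (dvd_neg.mp (by simpa using hdvd))
    · linear_combination ((2 + ε*m) * A' * m^e) * hε + (m^2 * A' * m^e) * hε2
    · intro β hβ
      have h4m : m^3 ∣ 4*m := ⟨1, by linear_combination ((2+ε*m)*m)*hε + m^3*hε2⟩
      have h3 : m^3 ∣ β^2 - (1 - 4*m) := by
        have e1 : β^2 - (1 - 4*m) = (β-1)*(β+1) + 4*m := by ring
        rw [e1]
        exact dvd_add (hβ.mul_right _) h4m
      exact (pow_dvd_pow m (by omega : e+2 ≤ 3)).trans h3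
  · have hnd2 : ¬ m ∣ 2 := by
      intro hdvd
      have h1 : m.natAbs ∣ 2 := by
        have := Int.natAbs_dvd_natAbs.mpr hdvd
        simpa using this
      have h2' := Nat.le_of_dvd (by norm_num) h1
      have h3 := hm.two_le
      omega
    have hq : ¬ m ∣ 2*A' := fun h => (hpm.dvd_mul.mp h).elim hnd2 hA'
    refine ⟨2*A', e, 4*A', e, by ring, hq, by ring, ?_, ?_⟩
    · intro h
      rcases hpm.dvd_mul.mp h with h | h
      · exact hnd2 ((hpm.dvd_mul.mp (by rwa [show (4:ℤ) = 2*2 by norm_num] at h)).elim id id)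
      · exact hA' h
    · intro β hβ
      interval_cases e
      · simp
      · rw [pow_one]
        have e1 : β^2 - (1 - 4*m) = (β-1)*(β+1) + 4*m := by ring
        rw [e1]
        exact dvd_add (((dvd_pow_self m (by norm_num : (3:ℕ) ≠ 0)).trans hβ).mul_right _)
          ⟨4, by ring⟩

end BQF

namespace BQF
section Surjectivity

variable (m : ℤ)

local notation "R" => Localization.Away m
local notation "φ" => algebraMap ℤ R

lemma surj_lemma (hm : m.natAbs.Prime) (Q' : BQF R) (hd : Q'.disc = φ (1 - 4*m)) :
    ∃ Q : BQF ℤ, Q.disc = 1 - 4*m ∧ Equiv (map (φ) Q) Q' := by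
  have hpm : Prime m := Int.prime_iff_natAbs_prime.mpr hm
  have hm0 : m ≠ 0 := hpm.ne_zero
  have hinj : Function.Injective (φ) := loc_inj m hm0
  have hu : IsUnit ((φ) m) := loc_unit m
  have hD0 : (1:ℤ) - 4*m ≠ 0 := by omega
  -- Stage A: make the `a`-coefficient nonzero
  obtain ⟨Q₁, hE1, ha1⟩ : ∃ Q₁ : BQF R, Equiv Q' Q₁ ∧ Q₁.a ≠ 0 := by
    by_cases ha : Q'.a ≠ 0
    · exact ⟨Q', equiv_refl Q', ha⟩
    push_neg at ha
    by_cases hc : Q'.c ≠ 0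
    · refine ⟨act ⟨!![0,-1;1,0], by simp [Matrix.det_fin_two_of]⟩ Q', ⟨_, rfl⟩, ?_⟩
      simpa [act] using hc
    push_neg at hc
    have hb : Q'.b ≠ 0 := by
      intro hb0
      apply hD0
      apply hinj
      have h1 : Q'.disc = 0 := by rw [disc, ha, hc, hb0]; ring
      rw [hd] at h1
      rw [h1, map_zero]
    refine ⟨act ⟨!![1,0;1,1], by simp [Matrix.det_fin_two_of]⟩ Q', ⟨_, rfl⟩, ?_⟩
    simpa [act, ha, hc] using hb
  have hd1 : Q₁.disc = φ (1 - 4*m) := by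
    obtain ⟨g, hg⟩ := hE1
    rw [← hg, disc_act, hd]
  -- Stage B: normalize the `a`-coefficient to `A' * m^e`, `e ≤ 1`, `¬ m ∣ A'`
  obtain ⟨A, k, hAk⟩ := loc_surj m Q₁.a
  have hA0 : A ≠ 0 := by
    intro h0
    apply ha1
    rw [h0, map_zero] at hAk
    exact (IsUnit.mul_left_eq_zero (hu.pow k)).mp hAk
  obtain ⟨s, A', hAfac, hA'⟩ := int_factor hpm A.natAbs A hA0 le_rfl
  set e : ℕ := (s + k) % 2 with he_def
  have he1 : e ≤ 1 := by omega
  obtain ⟨j, hj⟩ : ∃ j : ℤ, (e:ℤ) + k - s = 2*j := by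
    refine ⟨((e:ℤ) + k - s)/2, ?_⟩
    omega
  set U : Rˣ := hu.unit with hU
  have hUval : (U : R) = φ m := hu.unit_spec
  set x : R := ((U^j : Rˣ) : R) with hx
  set y : R := ((U^(-j) : Rˣ) : R) with hy0
  have hxy : x * y = 1 := by
    rw [hx, hy0, ← Units.val_mul, ← zpow_add]
    simp
  set dj : SL2 R := ⟨!![x, 0; 0, y], by
    rw [Matrix.det_fin_two_of, hxy]; ring⟩ with hdj
  set Q₂ : BQF R := act dj Q₁ with hQ₂
  have hxentries : dj.1 0 0 = x ∧ dj.1 0 1 = 0 ∧ dj.1 1 0 = 0 ∧ dj.1 1 1 = y := by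
    refine ⟨?_, ?_, ?_, ?_⟩ <;> simp [hdj]
  have ha2comp : Q₂.a = Q₁.a * x^2 := by
    rw [hQ₂]
    show Q₁.a * dj.1 0 0 ^2 + Q₁.b * dj.1 0 0 * dj.1 1 0 + Q₁.c * dj.1 1 0 ^2 = Q₁.a * x^2
    rw [hxentries.1, hxentries.2.2.1]; ring
  have hb2comp : Q₂.b = Q₁.b := by
    rw [hQ₂]
    show 2 * Q₁.a * dj.1 0 0 * dj.1 0 1 + Q₁.b * (dj.1 0 0 * dj.1 1 1 + dj.1 0 1 * dj.1 1 0)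
        + 2 * Q₁.c * dj.1 1 0 * dj.1 1 1 = Q₁.b
    rw [hxentries.1, hxentries.2.1, hxentries.2.2.1, hxentries.2.2.2, hxy]; ring
  -- the key identity for units
  have hxkey : x * x * (φ m)^s = (φ m)^e * (φ m)^k := by
    have h1 : (U^j) * (U^j) * U^(s:ℤ) = U^((e:ℤ)) * U^((k:ℤ)) := by
      rw [← zpow_add, ← zpow_add, ← zpow_add]
      congr 1
      omega
    have h2 := congrArg (Units.val) h1
    simp only [Units.val_mul] at h2
    rw [zpow_natCast, zpow_natCast, zpow_natCast] at h2
    rw [Units.val_pow_eq_pow_val, Units.val_pow_eq_pow_val, Units.val_pow_eq_pow_val, hUval] at h2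
    rw [hx]
    exact h2
  have ha2 : Q₂.a = φ (A' * m^e) := by
    rw [ha2comp]
    refine IsUnit.mul_right_cancel (hu.pow (k+s)) ?_
    have hAk' : Q₁.a * (φ m)^k = φ A' * (φ m)^s := by
      rw [hAk, hAfac, map_mul, map_pow]
    rw [map_mul, map_pow]
    have hexp : ((φ) m)^(k+s) = ((φ) m)^k * ((φ) m)^s := by rw [pow_add]
    rw [hexp]
    linear_combination (x*x*(φ m)^s) * hAk' + (φ A' * (φ m)^s) * hxkey
  have hd2 : Q₂.disc = φ (1 - 4*m) := by rw [hQ₂, disc_act, hd1]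
  -- Stage C: fix up the middle coefficient by a shear
  obtain ⟨B, t, hBt⟩ := loc_surj m Q₂.b
  obtain ⟨q, w, W, E, hq2a, hqnd, hW4a, hWnd, hgoal⟩ := norm_data hm e he1 hA'
  obtain ⟨β, hqd, hm3⟩ := crt_beta t hpm hqnd
  obtain ⟨y₂, hy₂⟩ := hqd
  set nn : R := φ y₂ * ((U⁻¹ : Rˣ) : R)^(t+w) with hnn
  set sh : SL2 R := ⟨!![1, nn; 0, 1], by rw [Matrix.det_fin_two_of]; ring⟩ with hsh
  set Q₃ : BQF R := act sh Q₂ with hQ₃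
  have hshentries : sh.1 0 0 = 1 ∧ sh.1 0 1 = nn ∧ sh.1 1 0 = 0 ∧ sh.1 1 1 = 1 := by
    refine ⟨?_, ?_, ?_, ?_⟩ <;> simp [hsh]
  have ha3 : Q₃.a = φ (A' * m^e) := by
    rw [hQ₃]
    show Q₂.a * sh.1 0 0 ^2 + Q₂.b * sh.1 0 0 * sh.1 1 0 + Q₂.c * sh.1 1 0 ^2 = _
    rw [hshentries.1, hshentries.2.2.1, ← ha2]; ring
  have hb3comp : Q₃.b = 2 * Q₂.a * nn + Q₂.b := by
    rw [hQ₃]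
    show 2 * Q₂.a * sh.1 0 0 * sh.1 0 1 + Q₂.b * (sh.1 0 0 * sh.1 1 1 + sh.1 0 1 * sh.1 1 0)
        + 2 * Q₂.c * sh.1 1 0 * sh.1 1 1 = _
    rw [hshentries.1, hshentries.2.1, hshentries.2.2.1, hshentries.2.2.2]; ring
  have hcanc : ((U⁻¹:Rˣ):R) * (φ m) = 1 := by
    rw [← hUval, ← Units.val_mul]
    simp
  have hinv : ((U⁻¹:Rˣ):R)^(t+w) * ((φ) m)^(t+w) = 1 := by
    rw [← mul_pow, hcanc, one_pow]
  have hb3 : Q₃.b = φ β := by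
    rw [hb3comp, ha2]
    refine IsUnit.mul_right_cancel (hu.pow (t+w)) ?_
    have hq2a' : 2 * φ (A'*m^e) = φ q * ((φ) m)^w := by
      rw [← map_ofNat (φ) 2, ← map_mul, hq2a, map_mul, map_pow]
    have hy' : φ β * ((φ) m)^t - φ B = φ q * φ y₂ := by
      rw [← map_pow, ← map_mul, ← map_sub, hy₂, map_mul]
    have hsplit : ((φ) m)^(t+w) = ((φ) m)^t * ((φ) m)^w := pow_add _ t w
    rw [hnn, hsplit]
    linear_combination (φ y₂) * hq2a'
      + (2*φ (A'*m^e)*φ y₂) * hinv + (((φ) m)^w) * hBt - (((φ) m)^w) * hy' 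
  have hd3 : Q₃.disc = φ (1 - 4*m) := by rw [hQ₃, disc_act, hd2]
  obtain ⟨C, s₂, hCs⟩ := loc_surj m Q₃.c
  have hint : W * m^E * C = (β^2 - (1-4*m)) * m^s₂ := by
    have hdisc3 : (φ β)^2 - 4 * (φ (A'*m^e)) * Q₃.c = φ (1-4*m) := by
      rw [← hb3, ← ha3, ← hd3, disc]
    have h4W : (4:R) * φ (A'*m^e) = φ W * ((φ) m)^E := by
      rw [← map_ofNat (φ) 4, ← map_mul, hW4a, map_mul, map_pow]
    apply hinj
    simp only [map_mul, map_pow, map_sub, map_ofNat, map_one] at hdisc3 h4W ⊢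
    linear_combination (-(φ W * ((φ) m)^E)) * hCs - (Q₃.c*((φ) m)^s₂) * h4W
      - (((φ) m)^s₂) * hdisc3
  obtain ⟨G, hG⟩ := hgoal β hm3
  have hWC : W * C = G * m^s₂ := by
    refine mul_left_cancel₀ (pow_ne_zero E hm0) ?_
    linear_combination hint + (m:ℤ)^s₂ * hG
  have hdvdC : (m^s₂ : ℤ) ∣ C := primepow_dvd hpm hWnd s₂ C ⟨G, by linear_combination hWC⟩
  obtain ⟨C₀, hC₀⟩ := hdvdC
  have hc3 : Q₃.c = φ C₀ := by
    refine IsUnit.mul_right_cancel (hu.pow s₂) ?_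
    rw [hCs, hC₀, map_mul, map_pow]; ring
  have hmapQ : map (φ) (⟨A'*m^e, β, C₀⟩ : BQF ℤ) = Q₃ := ext' ha3.symm hb3.symm hc3.symm
  refine ⟨⟨A'*m^e, β, C₀⟩, ?_, ?_⟩
  · apply hinj
    rw [← disc_map (φ) (⟨A'*m^e, β, C₀⟩ : BQF ℤ), hmapQ, hd3]
  · rw [hmapQ]
    exact equiv_symm (equiv_trans hE1 (equiv_trans ⟨dj, hQ₂.symm⟩ ⟨sh, hQ₃.symm⟩))

end Surjectivity
end BQF


/-- For `m` a nonzero integer with `|m|` prime, base change along `ℤ → ℤ[1/m]` induces a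
bijection from the set of `SL₂(ℤ)`-equivalence classes of integer binary quadratic forms
of discriminant `1 - 4m` onto the set of `SL₂(ℤ[1/m])`-equivalence classes of binary
quadratic forms over `ℤ[1/m]` of discriminant `1 - 4m`. -/
theorem base_change_bijection (m : ℤ) (hm : m.natAbs.Prime) :
    ∃ F : Quot (fun Q₁ Q₂ : {Q : BQF ℤ // Q.disc = 1 - 4 * m} =>
            BQF.Equiv Q₁.1 Q₂.1) ≃
          Quot (fun Q₁ Q₂ : {Q : BQF (Localization.Away m) //
              Q.disc = algebraMap ℤ (Localization.Away m) (1 - 4 * m)} =>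
            BQF.Equiv Q₁.1 Q₂.1),
      ∀ Q : {Q : BQF ℤ // Q.disc = 1 - 4 * m},
        F (Quot.mk _ Q) =
          Quot.mk _ ⟨Q.1.map (algebraMap ℤ (Localization.Away m)),
            by rw [BQF.disc_map, Q.2]⟩ := by
  have hpm : Prime m := Int.prime_iff_natAbs_prime.mpr hm
  have hm0 : m ≠ 0 := hpm.ne_zero
  set r₂ : {Q : BQF (Localization.Away m) //
      Q.disc = algebraMap ℤ (Localization.Away m) (1 - 4 * m)} →
      {Q : BQF (Localization.Away m) //
      Q.disc = algebraMap ℤ (Localization.Away m) (1 - 4 * m)} → Prop :=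
    fun Q₁ Q₂ => BQF.Equiv Q₁.1 Q₂.1 with hr₂
  have equivR : Equivalence r₂ :=
    ⟨fun a => BQF.equiv_refl _, fun h => BQF.equiv_symm h, fun h h' => BQF.equiv_trans h h'⟩
  have hresp : ∀ (Q Q' : {Q : BQF ℤ // Q.disc = 1 - 4 * m}), BQF.Equiv Q.1 Q'.1 →
      (Quot.mk r₂ ⟨Q.1.map (algebraMap ℤ (Localization.Away m)),
          by rw [BQF.disc_map, Q.2]⟩) =
      (Quot.mk r₂ ⟨Q'.1.map (algebraMap ℤ (Localization.Away m)),
          by rw [BQF.disc_map, Q'.2]⟩) := by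
    intro Q Q' hE
    apply Quot.sound
    obtain ⟨g, hg⟩ := hE
    refine ⟨Matrix.SpecialLinearGroup.map (algebraMap ℤ (Localization.Away m)) g, ?_⟩
    rw [← BQF.map_act, hg]
  set F₀ : Quot (fun Q₁ Q₂ : {Q : BQF ℤ // Q.disc = 1 - 4 * m} => BQF.Equiv Q₁.1 Q₂.1) →
      Quot r₂ :=
    Quot.lift (fun Q => Quot.mk r₂ ⟨Q.1.map (algebraMap ℤ (Localization.Away m)),
      by rw [BQF.disc_map, Q.2]⟩) hresp with hF₀
  have hbij : Function.Bijective F₀ := by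
    constructor
    · intro u v h
      induction u using Quot.ind with | _ Q₁ => ?_
      induction v using Quot.ind with | _ Q₂ => ?_
      apply Quot.sound
      have hrel := (Equivalence.eqvGen_iff equivR).mp (Quot.eqvGen_exact (r := r₂) h)
      obtain ⟨g, hg⟩ := hrel
      exact BQF.inj_lemma m hm Q₁.1 Q₂.1 Q₁.2 Q₂.2 g hg
    · intro v
      induction v using Quot.ind with | _ Q' => ?_
      obtain ⟨Q, hQd, hQE⟩ := BQF.surj_lemma m hm Q'.1 Q'.2
      exact ⟨Quot.mk _ ⟨Q, hQd⟩, Quot.sound hQE⟩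
  exact ⟨Equiv.ofBijective F₀ hbij, fun Q => rfl⟩
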